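/- arXiv:1102.4176 — 10 statements merged into one kernel-verified Lean document; each statement's English description precedes it below -/
import Mathlib

section
/- If a contract satisfies the incentive compatibility constraints, then for any two contract items (p_i,t_i) and (p_j,t_j), p_i > p_j if and only if t_i > t_j. -/
/-- If a contract satisfies the incentive compatibility constraints, then for any two
contract items `(p i, t i)` and `(p j, t j)`, `p i > p j` if and only if `t i > t j`. -/
theorem ic_power_time_order
    (K : ℕ) (hK : 1 ≤ K) (θ p t : ℕ → ℝ)
    (hθpos : ∀ k, 1 ≤ k → k ≤ K → 0 < θ k)
    (hθmono : ∀ i j, 1 ≤ i → i < j → j ≤ K → θ i < θ j)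
    (hp : ∀ k, 1 ≤ k → k ≤ K → 0 ≤ p k)
    (ht : ∀ k, 1 ≤ k → k ≤ K → 0 ≤ t k)
    (hIC : ∀ k j, 1 ≤ k → k ≤ K → 1 ≤ j → j ≤ K →
      θ k * t k - p k ≥ θ k * t j - p j) :
    ∀ i j, 1 ≤ i → i ≤ K → 1 ≤ j → j ≤ K → (p i > p j ↔ t i > t j) := by
  intro i j hi1 hiK hj1 hjK
  have h1 := hIC i j hi1 hiK hj1 hjK
  have h2 := hIC j i hj1 hjK hi1 hiK
  have hθi := hθpos i hi1 hiK
  have hθj := hθpos j hj1 hjK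
  constructor <;> intro h <;> nlinarith
end

section
/- If a contract satisfies the incentive compatibility constraints, then p_i = p_j if and only if t_i = t_j, for any two contract items (p_i,t_i) and (p_j,t_j). -/
/-- If a contract satisfies the incentive compatibility constraints, then
`p i = p j` if and only if `t i = t j`. -/
theorem ic_power_time_eq
    (K : ℕ) (hK : 1 ≤ K) (θ p t : ℕ → ℝ)
    (hθpos : ∀ k, 1 ≤ k → k ≤ K → 0 < θ k)
    (hθmono : ∀ i j, 1 ≤ i → i < j → j ≤ K → θ i < θ j)
    (hp : ∀ k, 1 ≤ k → k ≤ K → 0 ≤ p k)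
    (ht : ∀ k, 1 ≤ k → k ≤ K → 0 ≤ t k)
    (hIC : ∀ k j, 1 ≤ k → k ≤ K → 1 ≤ j → j ≤ K →
      θ k * t k - p k ≥ θ k * t j - p j) :
    ∀ i j, 1 ≤ i → i ≤ K → 1 ≤ j → j ≤ K → (p i = p j ↔ t i = t j) := by
  intro i j hi1 hiK hj1 hjK
  have h1 := hIC i j hi1 hiK hj1 hjK
  have h2 := hIC j i hj1 hjK hi1 hiK
  have hθi := hθpos i hi1 hiK
  have hθj := hθpos j hj1 hjK
  constructor
  · intro hpe
    have hij : θ i * t j ≤ θ i * t i := by linarith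
    have hji : θ j * t i ≤ θ j * t j := by linarith
    have := (mul_le_mul_iff_right₀ hθi).mp hij
    have := (mul_le_mul_iff_right₀ hθj).mp hji
    linarith
  · intro hte
    rw [hte] at h1 h2
    linarith
end

section
/- A contract {(p_k,t_k)}_{k=1}^K is feasible (i.e., satisfies all IC and IR constraints) if and only if: (a) 0 ≤ p_1 ≤ p_2 ≤ ... ≤ p_K and 0 ≤ t_1 ≤ t_2 ≤ ... ≤ t_K; (b) θ_1 t_1 − p_1 ≥ 0; and (c) for every k = 2,...,K, p_{k−1} + θ_{k−1}(t_k − t_{k−1}) ≤ p_k ≤ p_{k−1} + θ_k(t_k − t_{k−1}). -/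
/-- A contract is feasible (satisfies all IC and IR constraints) iff conditions
(a) monotone powers and times, (b) IR for the lowest type, and (c) the chained
power bounds hold. -/
theorem feasible_iff_conditions
    (K : ℕ) (hK : 1 ≤ K) (θ p t : ℕ → ℝ)
    (hθpos : ∀ k, 1 ≤ k → k ≤ K → 0 < θ k)
    (hθmono : ∀ i j, 1 ≤ i → i < j → j ≤ K → θ i < θ j)
    (hp : ∀ k, 1 ≤ k → k ≤ K → 0 ≤ p k)
    (ht : ∀ k, 1 ≤ k → k ≤ K → 0 ≤ t k) :
    ((∀ k j, 1 ≤ k → k ≤ K → 1 ≤ j → j ≤ K → θ k * t k - p k ≥ θ k * t j - p j) ∧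
     (∀ k, 1 ≤ k → k ≤ K → θ k * t k - p k ≥ 0))
    ↔
    ((∀ i j, 1 ≤ i → i ≤ j → j ≤ K → p i ≤ p j ∧ t i ≤ t j) ∧
     θ 1 * t 1 - p 1 ≥ 0 ∧
     (∀ k, 2 ≤ k → k ≤ K →
       p (k - 1) + θ (k - 1) * (t k - t (k - 1)) ≤ p k ∧
       p k ≤ p (k - 1) + θ k * (t k - t (k - 1)))) := by
  constructor
  · rintro ⟨hIC, hIR⟩
    have hadj : ∀ k, 2 ≤ k → k ≤ K →
        p (k-1) + θ (k-1) * (t k - t (k-1)) ≤ p k ∧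
        p k ≤ p (k-1) + θ k * (t k - t (k-1)) := by
      intro k hk2 hkK
      have h1 : 1 ≤ k - 1 := by omega
      have h2 : k - 1 ≤ K := by omega
      have h3 : 1 ≤ k := by omega
      have a := hIC k (k-1) h3 hkK h1 h2
      have b := hIC (k-1) k h1 h2 h3 hkK
      constructor <;> nlinarith
    have tadj : ∀ k, 2 ≤ k → k ≤ K → t (k-1) ≤ t k := by
      intro k hk2 hkK
      obtain ⟨a, b⟩ := hadj k hk2 hkK
      have hθ : θ (k-1) < θ k := hθmono (k-1) k (by omega) (by omega) hkK
      nlinarith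
    have padj : ∀ k, 2 ≤ k → k ≤ K → p (k-1) ≤ p k := by
      intro k hk2 hkK
      obtain ⟨a, b⟩ := hadj k hk2 hkK
      have htk := tadj k hk2 hkK
      have hθ : 0 < θ (k-1) := hθpos (k-1) (by omega) (by omega)
      nlinarith
    refine ⟨?_, hIR 1 le_rfl hK, hadj⟩
    intro i j hi hij
    induction j, hij using Nat.le_induction with
    | base => intro _; exact ⟨le_refl _, le_refl _⟩
    | succ m hm ih =>
      intro hmK
      obtain ⟨hp', ht'⟩ := ih (by omega)
      have hpm := padj (m+1) (by omega) hmK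
      have htm := tadj (m+1) (by omega) hmK
      simp only [Nat.add_sub_cancel] at hpm htm
      exact ⟨hp'.trans hpm, ht'.trans htm⟩
  · rintro ⟨hmono, hIR1, hchain⟩
    have hstep : ∀ j, 1 ≤ j → j + 1 ≤ K →
        p j + θ j * (t (j+1) - t j) ≤ p (j+1) ∧
        p (j+1) ≤ p j + θ (j+1) * (t (j+1) - t j) := by
      intro j hj hjK
      have h := hchain (j+1) (by omega) hjK
      simpa using h
    have hIC : ∀ k j, 1 ≤ k → k ≤ K → 1 ≤ j → j ≤ K →
        θ k * t k - p k ≥ θ k * t j - p j := by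
      intro k j hk hkK hj hjK
      rcases le_total j k with hjk | hkj
      · have key : ∀ m, j ≤ m → m ≤ k → θ k * t m - p m ≥ θ k * t j - p j := by
          intro m hjm
          induction m, hjm using Nat.le_induction with
          | base => intro _; exact le_refl _
          | succ n hn ih =>
            intro hnk
            have ihn := ih (by omega)
            obtain ⟨_, hub⟩ := hstep n (by omega) (by omega)
            have hθ : θ (n+1) ≤ θ k := by
              rcases eq_or_lt_of_le (show n+1 ≤ k from hnk) with h | h
              · rw [h]
              · exact (hθmono (n+1) k (by omega) h hkK).le
            have htn : t n ≤ t (n+1) :=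
              (hmono n (n+1) (by omega) (by omega) (by omega)).2
            nlinarith
        exact key k hjk le_rfl
      · have key : ∀ m, k ≤ m → m ≤ K → θ k * t k - p k ≥ θ k * t m - p m := by
          intro m hkm
          induction m, hkm using Nat.le_induction with
          | base => intro _; exact le_refl _
          | succ n hn ih =>
            intro hnK
            have ihn := ih (by omega)
            obtain ⟨hlb, _⟩ := hstep n (by omega) hnK
            have hθ : θ k ≤ θ n := by
              rcases eq_or_lt_of_le hn with h | h
              · rw [h]
              · exact (hθmono k n hk h (by omega)).le
            have htn : t n ≤ t (n+1) :=
              (hmono n (n+1) (by omega) (by omega) hnK).2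
            nlinarith
        exact key j hkj hjK
    refine ⟨hIC, ?_⟩
    intro k hk hkK
    have h1 := hIC k 1 hk hkK le_rfl hK
    have hθ : θ 1 ≤ θ k := by
      rcases eq_or_lt_of_le hk with h | h
      · rw [← h]
      · exact (hθmono 1 k le_rfl h hkK).le
    have ht1 : 0 ≤ t 1 := ht 1 le_rfl hK
    nlinarith
end

section
/- Given conditions (a) 0 ≤ t_1 ≤ ... ≤ t_K, and (c) p_{k−1} + θ_{k−1}(t_k − t_{k−1}) ≤ p_k ≤ p_{k−1} + θ_k(t_k − t_{k−1}) for k = 2,...,K, the upward incentive compatibility constraints hold: for all i < k, θ_i t_i − p_i ≥ θ_i t_k − p_k. -/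
/-- Conditions (a) and (c) imply the upward incentive compatibility constraints. -/
theorem conditions_imply_upward_IC
    (K : ℕ) (hK : 1 ≤ K) (θ p t : ℕ → ℝ)
    (hθpos : ∀ k, 1 ≤ k → k ≤ K → 0 < θ k)
    (hθmono : ∀ i j, 1 ≤ i → i < j → j ≤ K → θ i < θ j)
    (hp : ∀ k, 1 ≤ k → k ≤ K → 0 ≤ p k)
    (ht : ∀ k, 1 ≤ k → k ≤ K → 0 ≤ t k)
    (ha : ∀ i j, 1 ≤ i → i ≤ j → j ≤ K → t i ≤ t j)
    (hc : ∀ k, 2 ≤ k → k ≤ K →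
      p (k - 1) + θ (k - 1) * (t k - t (k - 1)) ≤ p k ∧
      p k ≤ p (k - 1) + θ k * (t k - t (k - 1))) :
    ∀ i k, 1 ≤ i → i < k → k ≤ K → θ i * t i - p i ≥ θ i * t k - p k := by
  intro i k hi hik hkK
  induction k with
  | zero => omega
  | succ n ih =>
    have h2 : 2 ≤ n + 1 := by omega
    have hlow := (hc (n + 1) h2 hkK).1
    simp only [Nat.add_sub_cancel] at hlow
    rcases eq_or_lt_of_le (Nat.lt_succ_iff.mp hik) with h | h
    · subst h; linarith
    · have hprev := ih h (by omega)
      have hθ : θ i ≤ θ n := le_of_lt (hθmono i n hi h (by omega))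
      have htm : t n ≤ t (n + 1) := ha n (n + 1) (by omega) (by omega) hkK
      nlinarith
end

section
/- In an optimal contract under complete information, each secondary user receives zero payoff: θ_k t_k = p_k for every k. That is, if some contract item satisfies θ_k t_k − p_k > 0, then the contract is not optimal, since decreasing t_k strictly increases the PU's utility. -/
open Finset

/-- In an optimal contract under complete information, each SU receives zero payoff:
`θ k * t k = p k` for every type `k`. -/
theorem optimal_complete_info_zero_payoff
    (K : ℕ) (hK : 1 ≤ K) (θ N : ℕ → ℝ) (R n0 : ℝ)
    (hθpos : ∀ k, 1 ≤ k → k ≤ K → 0 < θ k)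
    (hθmono : ∀ i j, 1 ≤ i → i < j → j ≤ K → θ i < θ j)
    (hN : ∀ k, 1 ≤ k → k ≤ K → 1 ≤ N k)
    (hR : 0 ≤ R) (hn0 : 0 < n0)
    (u : (ℕ → ℝ) → (ℕ → ℝ) → ℝ)
    (hu : ∀ p t, u p t =
      (R / 2 + (1 / 2) * Real.log (1 + (∑ k ∈ Finset.Icc 1 K, N k * p k) / n0)) /
        (1 + ∑ k ∈ Finset.Icc 1 K, N k * t k))
    (p t : ℕ → ℝ)
    (hadm : (∀ k, 1 ≤ k → k ≤ K → 0 ≤ p k) ∧ (∀ k, 1 ≤ k → k ≤ K → 0 ≤ t k) ∧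
      (∀ k, 1 ≤ k → k ≤ K → θ k * t k - p k ≥ 0))
    (hopt : ∀ p' t' : ℕ → ℝ,
      ((∀ k, 1 ≤ k → k ≤ K → 0 ≤ p' k) ∧ (∀ k, 1 ≤ k → k ≤ K → 0 ≤ t' k) ∧
        (∀ k, 1 ≤ k → k ≤ K → θ k * t' k - p' k ≥ 0)) →
      u p' t' ≤ u p t) :
    ∀ k, 1 ≤ k → k ≤ K → θ k * t k = p k := by
  intro k hk1 hkK
  obtain ⟨hp, ht, hIR⟩ := hadm
  by_contra hne
  have hθk := hθpos k hk1 hkK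
  have hgt : p k < θ k * t k := lt_of_le_of_ne (by linarith [hIR k hk1 hkK]) (fun h => hne h.symm)
  have hmem : ∀ j ∈ Finset.Icc 1 K, 1 ≤ j ∧ j ≤ K := by
    intro j hj; exact Finset.mem_Icc.mp hj
  have hkmem : k ∈ Finset.Icc 1 K := Finset.mem_Icc.mpr ⟨hk1, hkK⟩
  set S : ℝ := ∑ j ∈ Finset.Icc 1 K, N j * p j with hSdef
  have hS : 0 ≤ S := Finset.sum_nonneg (fun j hj => by
    obtain ⟨h1, h2⟩ := hmem j hj
    exact mul_nonneg (by linarith [hN j h1 h2]) (hp j h1 h2))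
  set num : ℝ := R / 2 + (1 / 2) * Real.log (1 + S / n0) with hnumdef
  have hnum : 0 ≤ num := by
    have hlog : 0 ≤ Real.log (1 + S / n0) :=
      Real.log_nonneg (by nlinarith [div_nonneg hS hn0.le])
    positivity
  have hT : 0 ≤ ∑ j ∈ Finset.Icc 1 K, N j * t j := Finset.sum_nonneg (fun j hj => by
    obtain ⟨h1, h2⟩ := hmem j hj
    exact mul_nonneg (by linarith [hN j h1 h2]) (ht j h1 h2))
  have hD : (0:ℝ) < 1 + ∑ j ∈ Finset.Icc 1 K, N j * t j := by linarith
  rcases hnum.lt_or_eq with hpos | hzero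
  · -- numerator positive: decrease t k
    set t' : ℕ → ℝ := Function.update t k (p k / θ k) with ht'def
    have hadm' : (∀ j, 1 ≤ j → j ≤ K → 0 ≤ p j) ∧ (∀ j, 1 ≤ j → j ≤ K → 0 ≤ t' j) ∧
        (∀ j, 1 ≤ j → j ≤ K → θ j * t' j - p j ≥ 0) := by
      refine ⟨hp, ?_, ?_⟩
      · intro j h1 h2
        by_cases hjk : j = k
        · subst hjk; simp [ht'def, Function.update_self]
          exact div_nonneg (hp j h1 h2) hθk.le
        · simp [ht'def, Function.update_of_ne hjk]; exact ht j h1 h2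
      · intro j h1 h2
        by_cases hjk : j = k
        · subst hjk; simp [ht'def, Function.update_self]
          rw [mul_div_cancel₀ _ (ne_of_gt hθk)]
        · simp only [ht'def, Function.update_of_ne hjk]; exact hIR j h1 h2
    have hsumlt : ∑ j ∈ Finset.Icc 1 K, N j * t' j < ∑ j ∈ Finset.Icc 1 K, N j * t j := by
      apply Finset.sum_lt_sum
      · intro j hj
        obtain ⟨h1, h2⟩ := hmem j hj
        by_cases hjk : j = k
        · subst hjk
          have hNk : (0:ℝ) < N j := by linarith [hN j h1 h2]
          have : p j / θ j < t j := (div_lt_iff₀ hθk).mpr (by linarith)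
          simp only [ht'def, Function.update_self]
          exact le_of_lt (by nlinarith)
        · simp [ht'def, Function.update_of_ne hjk]
      · refine ⟨k, hkmem, ?_⟩
        have hNk : (0:ℝ) < N k := by linarith [hN k hk1 hkK]
        have : p k / θ k < t k := (div_lt_iff₀ hθk).mpr (by linarith)
        simp only [ht'def, Function.update_self]
        nlinarith
    have hT' : 0 ≤ ∑ j ∈ Finset.Icc 1 K, N j * t' j := Finset.sum_nonneg (fun j hj => by
      obtain ⟨h1, h2⟩ := hmem j hj
      exact mul_nonneg (by linarith [hN j h1 h2]) (hadm'.2.1 j h1 h2))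
    have hD' : (0:ℝ) < 1 + ∑ j ∈ Finset.Icc 1 K, N j * t' j := by linarith
    have hlt : u p t < u p t' := by
      rw [hu p t, hu p t']
      exact div_lt_div_of_pos_left hpos hD' (by linarith)
    exact absurd (hopt p t' hadm') (not_le.mpr hlt)
  · -- numerator zero: p t is suboptimal vs a positive-payment contract
    set p' : ℕ → ℝ := fun _ => (1:ℝ) with hp'def
    set t' : ℕ → ℝ := fun j => 1 / θ j with ht'def
    have hadm' : (∀ j, 1 ≤ j → j ≤ K → 0 ≤ p' j) ∧ (∀ j, 1 ≤ j → j ≤ K → 0 ≤ t' j) ∧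
        (∀ j, 1 ≤ j → j ≤ K → θ j * t' j - p' j ≥ 0) := by
      refine ⟨fun j h1 h2 => zero_le_one, fun j h1 h2 => ?_, fun j h1 h2 => ?_⟩
      · exact div_nonneg zero_le_one (hθpos j h1 h2).le
      · simp only [hp'def, ht'def]
        rw [mul_one_div, div_self (ne_of_gt (hθpos j h1 h2))]
        norm_num
    have hS' : (0:ℝ) < ∑ j ∈ Finset.Icc 1 K, N j * p' j := by
      apply Finset.sum_pos
      · intro j hj
        obtain ⟨h1, h2⟩ := hmem j hj
        simp only [hp'def, mul_one]
        linarith [hN j h1 h2]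
      · exact ⟨1, Finset.mem_Icc.mpr ⟨le_refl 1, hK⟩⟩
    have hnum' : 0 < R / 2 + (1 / 2) * Real.log (1 + (∑ j ∈ Finset.Icc 1 K, N j * p' j) / n0) := by
      have hlog : 0 < Real.log (1 + (∑ j ∈ Finset.Icc 1 K, N j * p' j) / n0) :=
        Real.log_pos (by nlinarith [div_pos hS' hn0])
      positivity
    have hT' : 0 ≤ ∑ j ∈ Finset.Icc 1 K, N j * t' j := Finset.sum_nonneg (fun j hj => by
      obtain ⟨h1, h2⟩ := hmem j hj
      exact mul_nonneg (by linarith [hN j h1 h2]) (hadm'.2.1 j h1 h2))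
    have hlt : u p t < u p' t' := by
      rw [hu p t, hu p' t']
      rw [← hSdef, ← hnumdef, ← hzero]
      rw [zero_div]
      exact div_pos hnum' (by linarith)
    exact absurd (hopt p' t' hadm') (not_le.mpr hlt)
end

section
/- Under complete information, any contract with θ_k t_k = p_k for all k, total time allocation T' = Σ_k N_k t_k, and t_k > 0 for some k < K yields strictly smaller PU utility than the contract that allocates the entire time T' to the highest type K (i.e., t_K = T'/N_K, t_k = 0 for k < K, with p_K = θ_K t_K). Consequently, in an optimal contract only the highest type receives a positive item. -/
open Finset

/-- Under complete information, any zero-payoff contract allocating positive time to a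
type below the highest yields strictly smaller PU utility than allocating all the time
`T'` to the highest type `K`. -/
theorem highest_type_only_is_better
    (K : ℕ) (hK : 2 ≤ K) (θ N t : ℕ → ℝ) (R n0 T' : ℝ)
    (hθpos : ∀ k, 1 ≤ k → k ≤ K → 0 < θ k)
    (hθmono : ∀ i j, 1 ≤ i → i < j → j ≤ K → θ i < θ j)
    (hN : ∀ k, 1 ≤ k → k ≤ K → 1 ≤ N k)
    (hR : 0 ≤ R) (hn0 : 0 < n0)
    (ht : ∀ k, 1 ≤ k → k ≤ K → 0 ≤ t k)
    (hT' : T' = ∑ k ∈ Finset.Icc 1 K, N k * t k)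
    (hlow : ∃ k, 1 ≤ k ∧ k < K ∧ 0 < t k) :
    (R / 2 + (1 / 2) * Real.log (1 + (∑ k ∈ Finset.Icc 1 K, N k * (θ k * t k)) / n0)) /
        (1 + T')
      <
    (R / 2 + (1 / 2) * Real.log (1 + θ K * T' / n0)) / (1 + T') := by
  obtain ⟨k0, hk1, hk2, hk3⟩ := hlow
  have hterm : ∀ k ∈ Finset.Icc 1 K, 0 ≤ N k * t k := by
    intro k hk
    simp only [Finset.mem_Icc] at hk
    exact mul_nonneg (le_trans zero_le_one (hN k hk.1 hk.2)) (ht k hk.1 hk.2)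
  have hT'nonneg : 0 ≤ T' := hT' ▸ Finset.sum_nonneg hterm
  have hSnonneg : 0 ≤ ∑ k ∈ Finset.Icc 1 K, N k * (θ k * t k) := by
    apply Finset.sum_nonneg
    intro k hk
    simp only [Finset.mem_Icc] at hk
    exact mul_nonneg (le_trans zero_le_one (hN k hk.1 hk.2))
      (mul_nonneg (hθpos k hk.1 hk.2).le (ht k hk.1 hk.2))
  have hlt : ∑ k ∈ Finset.Icc 1 K, N k * (θ k * t k) < θ K * T' := by
    rw [hT', Finset.mul_sum]
    apply Finset.sum_lt_sum
    · intro k hk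
      simp only [Finset.mem_Icc] at hk
      rcases eq_or_lt_of_le hk.2 with h | h
      · subst h; ring_nf; exact le_refl _
      · have : θ k ≤ θ K := (hθmono k K hk.1 h le_rfl).le
        have hNk : 0 ≤ N k := le_trans zero_le_one (hN k hk.1 hk.2)
        calc N k * (θ k * t k) ≤ N k * (θ K * t k) := by
              apply mul_le_mul_of_nonneg_left _ hNk
              exact mul_le_mul_of_nonneg_right this (ht k hk.1 hk.2)
          _ = θ K * (N k * t k) := by ring
    · refine ⟨k0, Finset.mem_Icc.mpr ⟨hk1, hk2.le⟩, ?_⟩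
      have hθ : θ k0 < θ K := hθmono k0 K hk1 hk2 le_rfl
      have hNk : 0 < N k0 := lt_of_lt_of_le zero_lt_one (hN k0 hk1 hk2.le)
      have : N k0 * (θ k0 * t k0) < N k0 * (θ K * t k0) :=
        mul_lt_mul_of_pos_left (mul_lt_mul_of_pos_right hθ hk3) hNk
      linarith [this]
  have hlog : Real.log (1 + (∑ k ∈ Finset.Icc 1 K, N k * (θ k * t k)) / n0)
      < Real.log (1 + θ K * T' / n0) := by
    apply Real.log_lt_log
    · positivity
    · have h2 : (∑ k ∈ Finset.Icc 1 K, N k * (θ k * t k)) / n0 < θ K * T' / n0 :=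
        (div_lt_div_iff_of_pos_right hn0).mpr hlt
      linarith
  have hden : 0 < 1 + T' := by linarith
  exact (div_lt_div_iff_of_pos_right hden).mpr (by linarith)
end

section
/- Given fixed time allocations 0 ≤ t_1 ≤ ... ≤ t_K, the relay powers p_1* = θ_1 t_1 and p_k* = θ_1 t_1 + Σ_{i=2}^k θ_i (t_i − t_{i−1}) for k ≥ 2 form a feasible contract, i.e., they satisfy all IC and IR constraints. -/
open Finset

lemma tele_sum (t : ℕ → ℝ) (j : ℕ) : ∀ k, j ≤ k →
    ∑ i ∈ Finset.Ioc j k, (t i - t (i - 1)) = t k - t j := by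
  intro k hk
  induction k, hk using Nat.le_induction with
  | base => simp
  | succ n hn ih =>
    rw [Finset.sum_Ioc_succ_top (by omega), ih]
    simp

/-- Given fixed monotone time allocations, the relay powers
`p* k = θ 1 * t 1 + ∑_{i=2}^k θ i * (t i - t (i-1))` form a feasible contract. -/
theorem pstar_feasible
    (K : ℕ) (hK : 1 ≤ K) (θ t p : ℕ → ℝ)
    (hθpos : ∀ k, 1 ≤ k → k ≤ K → 0 < θ k)
    (hθmono : ∀ i j, 1 ≤ i → i < j → j ≤ K → θ i < θ j)
    (ht0 : 0 ≤ t 1)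
    (htmono : ∀ i j, 1 ≤ i → i ≤ j → j ≤ K → t i ≤ t j)
    (hpdef : ∀ k, 1 ≤ k → k ≤ K →
      p k = θ 1 * t 1 + ∑ i ∈ Finset.Icc 2 k, θ i * (t i - t (i - 1))) :
    (∀ k j, 1 ≤ k → k ≤ K → 1 ≤ j → j ≤ K →
      θ k * t k - p k ≥ θ k * t j - p j) ∧
    (∀ k, 1 ≤ k → k ≤ K → θ k * t k - p k ≥ 0) := by
  have key : ∀ j k, 1 ≤ j → j ≤ k → k ≤ K →
      p k - p j = ∑ i ∈ Finset.Ioc j k, θ i * (t i - t (i - 1)) := by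
    intro j k hj hjk hk
    rw [hpdef k (by omega) hk, hpdef j hj (by omega),
      show (2:ℕ) = 1 + 1 from rfl, Finset.Icc_add_one_left_eq_Ioc, Finset.Icc_add_one_left_eq_Ioc,
      ← Finset.sum_Ioc_consecutive _ hj hjk]
    ring
  have hΔ : ∀ i k, 1 < i → i ≤ k → k ≤ K → 0 ≤ t i - t (i - 1) := by
    intro i k h1 h2 h3
    have := htmono (i - 1) i (by omega) (by omega) (by omega)
    linarith
  have hmain : ∀ j k, 1 ≤ j → j ≤ k → k ≤ K →
      (θ k * t k - p k ≥ θ k * t j - p j) ∧ (θ j * t j - p j ≥ θ j * t k - p k) := by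
    intro j k hj hjk hk
    have hkey := key j k hj hjk hk
    have hsum := tele_sum t j k hjk
    constructor
    · have heq : θ k * (t k - t j) - (p k - p j)
          = ∑ i ∈ Finset.Ioc j k, (θ k - θ i) * (t i - t (i - 1)) := by
        rw [hkey, ← hsum, Finset.mul_sum, ← Finset.sum_sub_distrib]
        exact Finset.sum_congr rfl fun i _ => by ring
      have hnn : 0 ≤ ∑ i ∈ Finset.Ioc j k, (θ k - θ i) * (t i - t (i - 1)) := by
        refine Finset.sum_nonneg fun i hi => ?_
        rw [Finset.mem_Ioc] at hi
        have hθle : θ i ≤ θ k := by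
          rcases eq_or_lt_of_le hi.2 with h | h
          · rw [h]
          · exact le_of_lt (hθmono i k (by omega) h hk)
        exact mul_nonneg (by linarith) (hΔ i k (by omega) hi.2 hk)
      linarith
    · have heq : (p k - p j) - θ j * (t k - t j)
          = ∑ i ∈ Finset.Ioc j k, (θ i - θ j) * (t i - t (i - 1)) := by
        rw [hkey, ← hsum, Finset.mul_sum, ← Finset.sum_sub_distrib]
        exact Finset.sum_congr rfl fun i _ => by ring
      have hnn : 0 ≤ ∑ i ∈ Finset.Ioc j k, (θ i - θ j) * (t i - t (i - 1)) := by
        refine Finset.sum_nonneg fun i hi => ?_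
        rw [Finset.mem_Ioc] at hi
        have hθle : θ j ≤ θ i := le_of_lt (hθmono j i hj hi.1 (by omega))
        exact mul_nonneg (by linarith) (hΔ i k (by omega) hi.2 hk)
      linarith
  have hp1 : p 1 = θ 1 * t 1 := by
    rw [hpdef 1 le_rfl hK]; simp
  have hIR : ∀ k, 1 ≤ k → k ≤ K → θ k * t k - p k ≥ 0 := by
    intro k hk1 hkK
    have h1 := (hmain 1 k le_rfl hk1 hkK).1
    have hθ1 : θ 1 ≤ θ k := by
      rcases eq_or_lt_of_le hk1 with h | h
      · rw [← h]
      · exact le_of_lt (hθmono 1 k le_rfl h hkK)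
    nlinarith
  refine ⟨fun k j hk1 hkK hj1 hjK => ?_, hIR⟩
  rcases le_total j k with h | h
  · exact (hmain j k hj1 h hkK).1
  · exact (hmain k j hk1 h hjK).2
end

section
/- Given fixed time allocations 0 ≤ t_1 ≤ ... ≤ t_K, any feasible contract {(p_k,t_k)} satisfies p_k ≤ p_k* for every k, where p_1* = θ_1 t_1 and p_k* = θ_1 t_1 + Σ_{i=2}^k θ_i (t_i − t_{i−1}). Hence the p_k* maximize the total relay power Σ_k N_k p_k among all feasible contracts with these time allocations. -/
open Finset

/-- Given fixed monotone time allocations, any feasible contract satisfies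
`p k ≤ p* k` for every `k`, hence the `p* k` maximize total relay power. -/
theorem pstar_maximal
    (K : ℕ) (hK : 1 ≤ K) (θ t p N : ℕ → ℝ)
    (hθpos : ∀ k, 1 ≤ k → k ≤ K → 0 < θ k)
    (hθmono : ∀ i j, 1 ≤ i → i < j → j ≤ K → θ i < θ j)
    (hN : ∀ k, 1 ≤ k → k ≤ K → 1 ≤ N k)
    (ht0 : 0 ≤ t 1)
    (htmono : ∀ i j, 1 ≤ i → i ≤ j → j ≤ K → t i ≤ t j)
    (hp : ∀ k, 1 ≤ k → k ≤ K → 0 ≤ p k)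
    (hIC : ∀ k j, 1 ≤ k → k ≤ K → 1 ≤ j → j ≤ K →
      θ k * t k - p k ≥ θ k * t j - p j)
    (hIR : ∀ k, 1 ≤ k → k ≤ K → θ k * t k - p k ≥ 0) :
    (∀ k, 1 ≤ k → k ≤ K →
      p k ≤ θ 1 * t 1 + ∑ i ∈ Finset.Icc 2 k, θ i * (t i - t (i - 1))) ∧
    (∑ k ∈ Finset.Icc 1 K, N k * p k ≤
      ∑ k ∈ Finset.Icc 1 K,
        N k * (θ 1 * t 1 + ∑ i ∈ Finset.Icc 2 k, θ i * (t i - t (i - 1)))) := by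
  have main : ∀ k, 1 ≤ k → k ≤ K →
      p k ≤ θ 1 * t 1 + ∑ i ∈ Finset.Icc 2 k, θ i * (t i - t (i - 1)) := by
    intro k hk
    induction k, hk using Nat.le_induction with
    | base =>
      intro hK1
      simp only [Finset.Icc_self, Finset.Icc_eq_empty_of_lt (by norm_num : (1:ℕ) < 2),
        Finset.sum_empty, add_zero]
      have := hIR 1 le_rfl hK1
      nlinarith
    | succ n hn ih =>
      intro hnK
      have hnK' : n ≤ K := le_trans (Nat.le_succ n) hnK
      have hIH := ih hnK'
      have hICn := hIC (n+1) n (by omega) hnK hn hnK'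
      have hsum : ∑ i ∈ Finset.Icc 2 (n+1), θ i * (t i - t (i - 1))
          = (∑ i ∈ Finset.Icc 2 n, θ i * (t i - t (i - 1)))
            + θ (n+1) * (t (n+1) - t ((n+1) - 1)) :=
        Finset.sum_Icc_succ_top (by omega) _
      have hsimp : (n+1) - 1 = n := by omega
      rw [hsum, hsimp]
      nlinarith
  refine ⟨main, ?_⟩
  apply Finset.sum_le_sum
  intro k hk
  rw [Finset.mem_Icc] at hk
  have hNk : (0:ℝ) ≤ N k := le_trans zero_le_one (hN k hk.1 hk.2)
  exact mul_le_mul_of_nonneg_left (main k hk.1 hk.2) hNk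
end

section
/- Given fixed time allocations 0 ≤ t_1 ≤ ... ≤ t_K, the powers p_1* = θ_1 t_1 and p_k* = θ_1 t_1 + Σ_{i=2}^k θ_i (t_i − t_{i−1}) are the unique feasible relay powers achieving the maximum total relay power Σ_k N_k p_k: if a feasible power vector (p̄_1,...,p̄_K) satisfies Σ_k N_k p̄_k = Σ_k N_k p_k*, then p̄_k = p_k* for all k. -/
open Finset

/-- The powers `p* k` are the unique feasible relay powers achieving the maximum total
relay power: any feasible `p̄` with the same total weighted power equals `p*`. -/
theorem pstar_unique
    (K : ℕ) (hK : 1 ≤ K) (θ t pbar N : ℕ → ℝ)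
    (hθpos : ∀ k, 1 ≤ k → k ≤ K → 0 < θ k)
    (hθmono : ∀ i j, 1 ≤ i → i < j → j ≤ K → θ i < θ j)
    (hN : ∀ k, 1 ≤ k → k ≤ K → 1 ≤ N k)
    (ht0 : 0 ≤ t 1)
    (htmono : ∀ i j, 1 ≤ i → i ≤ j → j ≤ K → t i ≤ t j)
    (hp : ∀ k, 1 ≤ k → k ≤ K → 0 ≤ pbar k)
    (hIC : ∀ k j, 1 ≤ k → k ≤ K → 1 ≤ j → j ≤ K →
      θ k * t k - pbar k ≥ θ k * t j - pbar j)
    (hIR : ∀ k, 1 ≤ k → k ≤ K → θ k * t k - pbar k ≥ 0)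
    (hsum : ∑ k ∈ Finset.Icc 1 K, N k * pbar k =
      ∑ k ∈ Finset.Icc 1 K,
        N k * (θ 1 * t 1 + ∑ i ∈ Finset.Icc 2 k, θ i * (t i - t (i - 1)))) :
    ∀ k, 1 ≤ k → k ≤ K →
      pbar k = θ 1 * t 1 + ∑ i ∈ Finset.Icc 2 k, θ i * (t i - t (i - 1)) := by
  set P : ℕ → ℝ := fun k => θ 1 * t 1 + ∑ i ∈ Finset.Icc 2 k, θ i * (t i - t (i - 1)) with hP
  -- step formula
  have hstep : ∀ k, 2 ≤ k → P k = P (k - 1) + θ k * (t k - t (k - 1)) := by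
    intro k hk
    obtain ⟨m, rfl⟩ : ∃ m, k = m + 1 := ⟨k - 1, (Nat.succ_pred_eq_of_pos (by omega)).symm⟩
    simp only [hP]
    rw [Finset.sum_Icc_succ_top (by omega : 2 ≤ m + 1)]
    simp only [Nat.add_sub_cancel]
    ring
  -- pointwise bound pbar k ≤ P k
  have hle : ∀ k, 1 ≤ k → k ≤ K → pbar k ≤ P k := by
    intro k
    induction k with
    | zero => omega
    | succ m ih =>
      intro h1 h2
      rcases Nat.lt_or_ge m 1 with hm | hm
      · have : m = 0 := by omega
        subst this
        have := hIR 1 le_rfl hK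
        simp only [hP]
        rw [Finset.Icc_eq_empty (by omega)]
        simp
        linarith
      · have hIC' := hIC (m + 1) m (by omega) h2 hm (by omega)
        have hm1 : pbar m ≤ P m := ih hm (by omega)
        have := hstep (m + 1) (by omega)
        simp only [Nat.add_sub_cancel] at this
        rw [this]
        linarith
  -- sum of nonneg terms is zero
  have hzero : ∑ k ∈ Finset.Icc 1 K, N k * (P k - pbar k) = 0 := by
    have e : ∀ k, N k * (P k - pbar k) = N k * P k - N k * pbar k := fun k => by ring
    simp only [e]
    rw [Finset.sum_sub_distrib, hsum]
    simp only [hP, sub_self]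
  have hterm := (Finset.sum_eq_zero_iff_of_nonneg (fun i hi => by
    simp only [Finset.mem_Icc] at hi
    have h1 := hN i hi.1 hi.2
    have h2 := hle i hi.1 hi.2
    nlinarith)).mp hzero
  intro k h1 h2
  have hk := hterm k (Finset.mem_Icc.mpr ⟨h1, h2⟩)
  have hNk := hN k h1 h2
  have : P k - pbar k = 0 := by
    rcases mul_eq_zero.mp hk with h | h
    · linarith
    · exact h
  simp only [hP] at this ⊢
  linarith
end

section
/- Let T*(θ) > 0 satisfy the first-order condition F(θ,T*) := θ(1+T*) − (1+θT*)·log(1+θT*) = 0 with θ > 0. Then 1 − T*·log(1+θT*) < 0, and consequently ∂F/∂θ = 1 − T*·log(1+θT*) < 0 and ∂F/∂T* = −θ·log(1+θT*) < 0, so dT*/dθ = −(∂F/∂θ)/(∂F/∂T*) < 0: the optimal total time allocation is strictly decreasing in the highest type θ. -/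
/-- If `T* > 0` satisfies the first-order condition
`θ(1+T*) = (1+θT*)·log(1+θT*)` with `θ > 0`, then
`1 - T*·log(1+θT*) < 0`, `-θ·log(1+θT*) < 0`, and
`dT*/dθ = -(1 - T*·log(1+θT*)) / (-θ·log(1+θT*)) < 0`. -/
theorem optimal_time_decreasing_in_type
    (θ T : ℝ) (hθ : 0 < θ) (hT : 0 < T)
    (hFOC : θ * (1 + T) - (1 + θ * T) * Real.log (1 + θ * T) = 0) :
    1 - T * Real.log (1 + θ * T) < 0 ∧
    -(θ * Real.log (1 + θ * T)) < 0 ∧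
    -((1 - T * Real.log (1 + θ * T)) / (-(θ * Real.log (1 + θ * T)))) < 0 := by
  set L := Real.log (1 + θ * T) with hLdef
  have hx : 0 < θ * T := mul_pos hθ hT
  have hLlt : L < θ * T := by
    have := Real.log_lt_sub_one_of_pos (by linarith : (0:ℝ) < 1 + θ * T) (by linarith)
    linarith
  have hLpos : 0 < L := by
    nlinarith
  have h1' : 1 - T * L < 0 := by nlinarith
  have h2' : -(θ * L) < 0 := by nlinarith
  exact ⟨h1', h2', neg_neg_of_pos (div_pos_of_neg_of_neg h1' h2')⟩
end
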